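/- Let E be a finite-dimensional real inner product space, let n ≥ 3 be an integer and set θ = 2 - 1/(n-2). Let a, b > 0 and A ≥ 0 be real constants. Let f_1, f_2 : E → ℝ be twice continuously differentiable nonnegative functions such that, for i = 1, 2 and every x ∈ E, a·f_i(x)·Δf_i(x) - b·‖∇f_i(x)‖² ≥ -A·f_i(x)^θ. Then f = f_1 + f_2 satisfies a·f(x)·Δf(x) - b·‖∇f(x)‖² ≥ -2A·f(x)^θ for every x ∈ E. -/

import Mathlib

/-- The Laplacian of `g : E → ℝ` at `x`: the trace of the Hessian, computed in the standard
orthonormal basis of the finite-dimensional real inner product space `E`. -/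
noncomputable def laplacian {E : Type*} [NormedAddCommGroup E] [InnerProductSpace ℝ E]
    [FiniteDimensional ℝ E] (g : E → ℝ) (x : E) : ℝ :=
  ∑ i, iteratedFDeriv ℝ 2 g x ![stdOrthonormalBasis ℝ E i, stdOrthonormalBasis ℝ E i]

/-- One-dimensional fact: at a global minimum of a `C²` function the second
derivative is nonnegative. -/
lemma deriv2_nonneg_of_min (g : ℝ → ℝ) (hg : ContDiff ℝ 2 g) (hmin : ∀ t, g 0 ≤ g t) :
    0 ≤ deriv (deriv g) 0 := by
  by_contra hcon
  push_neg at hcon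
  have hg1 : ContDiff ℝ 1 (deriv g) := by
    have hg2 : ContDiff ℝ (1 + 1) g := by exact_mod_cast hg
    exact (contDiff_succ_iff_deriv.mp hg2).2.2
  have hd0 : deriv g 0 = 0 := by
    have hloc : IsLocalMin g 0 := Filter.Eventually.of_forall hmin
    exact hloc.deriv_eq_zero
  have hdd : HasDerivAt (deriv g) (deriv (deriv g) 0) 0 :=
    ((hg1.differentiable one_ne_zero) 0).hasDerivAt
  have hslope := hasDerivAt_iff_tendsto_slope.mp hdd
  have hev : ∀ᶠ t in nhdsWithin (0:ℝ) {(0:ℝ)}ᶜ, slope (deriv g) 0 t < 0 :=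
    hslope.eventually_lt_const hcon
  have hev' : ∀ᶠ t in nhdsWithin (0:ℝ) (Set.Ioi 0), slope (deriv g) 0 t < 0 :=
    hev.filter_mono (nhdsWithin_mono 0 (fun t ht => ne_of_gt ht))
  obtain ⟨δ, hδ, hsub⟩ := mem_nhdsGT_iff_exists_Ioo_subset.mp hev'
  have hδ0 : (0:ℝ) < δ := hδ
  have hneg : ∀ t ∈ Set.Ioo (0:ℝ) δ, deriv g t < 0 := by
    intro t ht
    have hs := hsub ht
    rw [Set.mem_setOf_eq, slope_def_field, hd0] at hs
    have ht0 : (0:ℝ) < t := ht.1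
    have : (deriv g t - 0) / (t - 0) < 0 := hs
    rw [sub_zero, sub_zero] at this
    rcases div_neg_iff.mp this with ⟨h1, h2⟩ | ⟨h1, _⟩
    · linarith
    · exact h1
  have hanti : StrictAntiOn g (Set.Icc 0 (δ/2)) := by
    refine strictAntiOn_of_deriv_neg (convex_Icc _ _) hg.continuous.continuousOn ?_
    intro t ht
    rw [interior_Icc] at ht
    exact hneg t ⟨ht.1, by linarith [ht.2]⟩
  have h1 : g (δ/2) < g 0 :=
    hanti ⟨le_rfl, by linarith⟩ ⟨by linarith, le_rfl⟩ (by linarith)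
  linarith [hmin (δ/2)]

/-- At a global minimum of a `C²` function, every diagonal second derivative is
nonnegative. -/
lemma second_deriv_nonneg_of_min {E : Type*} [NormedAddCommGroup E] [InnerProductSpace ℝ E]
    (f : E → ℝ) (hf : ContDiff ℝ 2 f) (x : E) (hmin : ∀ y, f x ≤ f y) (v : E) :
    0 ≤ iteratedFDeriv ℝ 2 f x ![v, v] := by
  set g : ℝ → ℝ := fun t => f (x + t • v) with hgdef
  have hL : ContDiff ℝ 2 fun t : ℝ => x + t • v :=
    contDiff_const.add (contDiff_id.smul contDiff_const)
  have hg : ContDiff ℝ 2 g := hf.comp hL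
  have hf' : ContDiff ℝ 1 (fderiv ℝ f) := hf.fderiv_right (by norm_num)
  have hLd : ∀ t : ℝ, HasDerivAt (fun s : ℝ => x + s • v) v t := fun t => by
    simpa using ((hasDerivAt_id t).smul_const v).const_add x
  have hgd : ∀ t, HasDerivAt g (fderiv ℝ f (x + t • v) v) t := fun t =>
    ((hf.differentiable two_ne_zero) (x + t • v)).hasFDerivAt.comp_hasDerivAt t (hLd t)
  have hderiv : deriv g = fun t => fderiv ℝ f (x + t • v) v := funext fun t => (hgd t).deriv
  have hc : HasDerivAt (fun t : ℝ => fderiv ℝ f (x + t • v)) (fderiv ℝ (fderiv ℝ f) x v) 0 := by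
    have h := ((hf'.differentiable one_ne_zero) (x + (0:ℝ) • v)).hasFDerivAt.comp_hasDerivAt 0 (hLd 0)
    simp only [zero_smul, add_zero] at h; exact h
  have h2 : HasDerivAt (fun t : ℝ => fderiv ℝ f (x + t • v) v)
      (fderiv ℝ (fderiv ℝ f) x v v) 0 := by
    simpa using hc.clm_apply (hasDerivAt_const (0:ℝ) v)
  have hsecond : deriv (deriv g) 0 = fderiv ℝ (fderiv ℝ f) x v v := by
    rw [hderiv]; exact h2.deriv
  have h0 := deriv2_nonneg_of_min g hg (fun t => by simpa [hgdef] using hmin (x + t • v))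
  rw [iteratedFDeriv_two_apply]
  simp only [Matrix.cons_val_zero, Matrix.cons_val_one, Matrix.head_cons]
  rw [hsecond] at h0
  exact h0

/-- At a global minimum of a `C²` function, the Laplacian is nonnegative. -/
lemma laplacian_nonneg_of_min {E : Type*} [NormedAddCommGroup E] [InnerProductSpace ℝ E]
    [FiniteDimensional ℝ E]
    (f : E → ℝ) (hf : ContDiff ℝ 2 f) (x : E) (hmin : ∀ y, f x ≤ f y) :
    0 ≤ laplacian f x :=
  Finset.sum_nonneg fun _ _ => second_deriv_nonneg_of_min f hf x hmin _

lemma laplacian_add {E : Type*} [NormedAddCommGroup E] [InnerProductSpace ℝ E]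
    [FiniteDimensional ℝ E] (f g : E → ℝ) (hf : ContDiff ℝ 2 f) (hg : ContDiff ℝ 2 g) (x : E) :
    laplacian (f + g) x = laplacian f x + laplacian g x := by
  unfold laplacian
  rw [← Finset.sum_add_distrib]
  refine Finset.sum_congr rfl fun i _ => ?_
  rw [iteratedFDeriv_add_apply (by exact_mod_cast hf.contDiffAt) (by exact_mod_cast hg.contDiffAt)]
  simp

lemma gradient_add_of_contDiff {E : Type*} [NormedAddCommGroup E] [InnerProductSpace ℝ E]
    [FiniteDimensional ℝ E] (f g : E → ℝ) (hf : ContDiff ℝ 2 f) (hg : ContDiff ℝ 2 g) (x : E) :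
    gradient (f + g) x = gradient f x + gradient g x := by
  unfold gradient
  rw [fderiv_add ((hf.differentiable two_ne_zero) x) ((hg.differentiable two_ne_zero) x), map_add]

set_option maxHeartbeats 1000000

/-- (Euclidean-domain version of Guan–Li, Lemma 2.2.) Let `E` be a
finite-dimensional real inner product space, `n ≥ 3`, `θ = 2 - 1/(n-2)`, `a, b > 0`, `A ≥ 0`.
If `f₁, f₂ : E → ℝ` are `C²` nonnegative functions with
`a fᵢ Δfᵢ - b ‖∇fᵢ‖² ≥ -A fᵢ^θ` everywhere, then `f = f₁ + f₂` satisfies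
`a f Δf - b ‖∇f‖² ≥ -2A f^θ` everywhere. -/
theorem guan_li_superadditivity {E : Type*} [NormedAddCommGroup E] [InnerProductSpace ℝ E]
    [FiniteDimensional ℝ E]
    (n : ℕ) (hn : 3 ≤ n) (θ : ℝ) (hθ : θ = 2 - 1 / ((n : ℝ) - 2))
    (a b A : ℝ) (ha : 0 < a) (hb : 0 < b) (hA : 0 ≤ A)
    (f₁ f₂ : E → ℝ) (hf₁ : ContDiff ℝ 2 f₁) (hf₂ : ContDiff ℝ 2 f₂)
    (hf₁0 : ∀ x, 0 ≤ f₁ x) (hf₂0 : ∀ x, 0 ≤ f₂ x)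
    (h₁ : ∀ x, a * f₁ x * laplacian f₁ x - b * ‖gradient f₁ x‖ ^ 2 ≥ -A * f₁ x ^ θ)
    (h₂ : ∀ x, a * f₂ x * laplacian f₂ x - b * ‖gradient f₂ x‖ ^ 2 ≥ -A * f₂ x ^ θ) :
    ∀ x, a * (f₁ + f₂) x * laplacian (f₁ + f₂) x - b * ‖gradient (f₁ + f₂) x‖ ^ 2 ≥
      -(2 * A) * (f₁ + f₂) x ^ θ := by
  -- basic facts about θ
  have hn3 : (3:ℝ) ≤ (n:ℝ) := by exact_mod_cast hn
  have hn2 : (1:ℝ) ≤ (n:ℝ) - 2 := by linarith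
  have hθ1 : 1 ≤ θ := by
    rw [hθ]
    have : 1 / ((n:ℝ) - 2) ≤ 1 := by
      rw [div_le_one (by linarith)]; linarith
    linarith
  have hθ0 : θ ≠ 0 := by linarith
  have hθm1 : 0 ≤ θ - 1 := by linarith
  intro x
  have hlap := laplacian_add f₁ f₂ hf₁ hf₂ x
  have hgrad := gradient_add_of_contDiff f₁ f₂ hf₁ hf₂ x
  simp only [Pi.add_apply, hlap, hgrad]
  set p := f₁ x with hp_def
  set q := f₂ x with hq_def
  set L₁ := laplacian f₁ x with hL1_def
  set L₂ := laplacian f₂ x with hL2_def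
  set u := gradient f₁ x with hu_def
  set w := gradient f₂ x with hw_def
  rcases eq_or_lt_of_le (hf₁0 x) with hp0 | hp
  · -- f₁ x = 0
    have hp0' : p = 0 := hp0.symm
    have h1 := h₁ x
    rw [← hp_def, hp0', Real.zero_rpow hθ0] at h1
    have hnu : ‖u‖ ^ 2 ≤ 0 := by simp only [← hu_def] at h1; nlinarith
    have hu0 : u = 0 := by
      have : ‖u‖ ^ 2 = 0 := le_antisymm hnu (sq_nonneg _)
      have : ‖u‖ = 0 := by nlinarith [norm_nonneg u]
      exact norm_eq_zero.mp this
    have hL1 : 0 ≤ L₁ := laplacian_nonneg_of_min f₁ hf₁ x (fun y => by rw [← hp0]; exact hf₁0 y)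
    have h2 := h₂ x
    rw [← hq_def, ← hL2_def, ← hw_def] at h2
    have hq0 : 0 ≤ q := hf₂0 x
    have hqθ : 0 ≤ q ^ θ := Real.rpow_nonneg hq0 θ
    rw [hp0', hu0]
    simp only [zero_add]
    nlinarith [mul_nonneg (mul_nonneg ha.le hq0) hL1, mul_nonneg hA hqθ]
  · rcases eq_or_lt_of_le (hf₂0 x) with hq0 | hq
    · -- f₂ x = 0
      have hq0' : q = 0 := hq0.symm
      have h2 := h₂ x
      rw [← hq_def, hq0', Real.zero_rpow hθ0] at h2
      have hnw : ‖w‖ ^ 2 ≤ 0 := by simp only [← hw_def] at h2; nlinarith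
      have hw0 : w = 0 := by
        have : ‖w‖ ^ 2 = 0 := le_antisymm hnw (sq_nonneg _)
        have : ‖w‖ = 0 := by nlinarith [norm_nonneg w]
        exact norm_eq_zero.mp this
      have hL2 : 0 ≤ L₂ := laplacian_nonneg_of_min f₂ hf₂ x (fun y => by rw [← hq0]; exact hf₂0 y)
      have h1 := h₁ x
      rw [← hp_def, ← hL1_def, ← hu_def] at h1
      have hp0' : 0 ≤ p := hp.le
      have hpθ : 0 ≤ p ^ θ := Real.rpow_nonneg hp0' θ
      rw [hq0', hw0]
      simp only [add_zero]
      nlinarith [mul_nonneg (mul_nonneg ha.le hp0') hL2, mul_nonneg hA hpθ]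
    · -- main case: p > 0, q > 0
      have hs : 0 < p + q := by linarith
      have hrp : ∀ r : ℝ, 0 < r → r ^ θ = r * r ^ (θ - 1) := by
        intro r hr
        have h := Real.rpow_add hr 1 (θ - 1)
        rw [Real.rpow_one, show (1:ℝ) + (θ - 1) = θ by ring] at h
        exact h
      have hps := hrp p hp
      have hqs := hrp q hq
      have hss := hrp (p + q) hs
      set p1 := p ^ (θ - 1) with hp1_def
      set q1 := q ^ (θ - 1) with hq1_def
      set s1 := (p + q) ^ (θ - 1) with hs1_def
      have m7 : p1 ≤ s1 := Real.rpow_le_rpow hp.le (by linarith) hθm1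
      have m8 : q1 ≤ s1 := Real.rpow_le_rpow hq.le (by linarith) hθm1
      have h1 := h₁ x
      rw [← hp_def, ← hL1_def, ← hu_def, hps] at h1
      have h2 := h₂ x
      rw [← hq_def, ← hL2_def, ← hw_def, hqs] at h2
      have h1' : -A * (p * p1) ≤ a * p * L₁ - b * ‖u‖ ^ 2 := h1
      have h2' : -A * (q * q1) ≤ a * q * L₂ - b * ‖w‖ ^ 2 := h2
      have hnorm : ‖u + w‖ ^ 2 = ‖u‖ ^ 2 + 2 * inner ℝ u w + ‖w‖ ^ 2 := norm_add_sq_real u w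
      have hip : (inner ℝ u w : ℝ) ≤ ‖u‖ * ‖w‖ := real_inner_le_norm u w
      have e1 := mul_le_mul_of_nonneg_left h1' (sq_nonneg q)
      have e2 := mul_le_mul_of_nonneg_left h2' (sq_nonneg p)
      have e3 := mul_le_mul_of_nonneg_left h1' (mul_pos hp hq).le
      have e4 := mul_le_mul_of_nonneg_left h2' (mul_pos hp hq).le
      have e5 : b * (2 * (p * q) * (‖u‖ * ‖w‖)) ≤ b * (q ^ 2 * ‖u‖ ^ 2 + p ^ 2 * ‖w‖ ^ 2) := by
        have : 2 * (p * q) * (‖u‖ * ‖w‖) ≤ q ^ 2 * ‖u‖ ^ 2 + p ^ 2 * ‖w‖ ^ 2 := by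
          nlinarith [sq_nonneg (q * ‖u‖ - p * ‖w‖)]
        exact mul_le_mul_of_nonneg_left this hb.le
      have e6 : b * ((p * q) * (inner ℝ u w : ℝ)) ≤ b * ((p * q) * (‖u‖ * ‖w‖)) :=
        mul_le_mul_of_nonneg_left (mul_le_mul_of_nonneg_left hip (mul_pos hp hq).le) hb.le
      have e7 : (A * ((p * q) * (p + q))) * p1 ≤ (A * ((p * q) * (p + q))) * s1 :=
        mul_le_mul_of_nonneg_left m7 (by positivity)
      have e8 : (A * ((p * q) * (p + q))) * q1 ≤ (A * ((p * q) * (p + q))) * s1 :=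
        mul_le_mul_of_nonneg_left m8 (by positivity)
      have key : (p * q) * (-(2 * A) * ((p + q) * s1)) ≤
          (p * q) * (a * (p + q) * (L₁ + L₂) - b * ‖u + w‖ ^ 2) := by
        rw [hnorm]
        linarith [e1, e2, e3, e4, e5, e6, e7, e8]
      rw [ge_iff_le, hss]
      exact le_of_mul_le_mul_left (by linarith [key]) (mul_pos hp hq)
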